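/- Let α > 0 and let h ∈ C¹([0,∞)×[0,∞)) have ‖h‖_X ≤ x, where ‖h‖_X = sup_{u,r≥0}[(1+r+u)²|h(u,r)| + (1+r+u)³|∂h/∂r(u,r)|], and assume |sin h̄(u,r)| ≤ |h(u,r) − h̄(u,r)| for all u ≥ 0, r > 0. Then the metric function g̃(u,r) = ḡ(u,r) − (α/r)∫₀ʳ s²g(u,s)(2 sin²h̄(u,s)/s² + sin⁴h̄(u,s)/s⁴) ds satisfies g̃(u,r) ≥ exp(−α(x² + x⁴)/58) − (α/6)(x² + x⁴) for all u ≥ 0 and r > 0. -/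

import Mathlib

noncomputable section
open Real MeasureTheory Set

/-- Radial average `h̄(u,r) = (1/r)∫₀ʳ h(u,s) ds`. -/
def hbar (h : ℝ → ℝ → ℝ) (u r : ℝ) : ℝ := (1 / r) * ∫ s in (0:ℝ)..r, h u s

/-- Bondi metric function `g`. -/
def gmet (α : ℝ) (h : ℝ → ℝ → ℝ) (u r : ℝ) : ℝ :=
  Real.exp (-α * ∫ s in Set.Ioi r,
    ((h u s - hbar h u s) ^ 2 / s) * (1 + 2 * Real.sin (hbar h u s) ^ 2 / s ^ 2))

/-- Radial average of `g`. -/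
def gbarm (α : ℝ) (h : ℝ → ℝ → ℝ) (u r : ℝ) : ℝ := (1 / r) * ∫ s in (0:ℝ)..r, gmet α h u s

/-- Bondi metric function `g̃`. -/
def gtil (α : ℝ) (h : ℝ → ℝ → ℝ) (u r : ℝ) : ℝ :=
  gbarm α h u r - (α / r) * ∫ s in (0:ℝ)..r,
    s ^ 2 * gmet α h u s *
      (2 * Real.sin (hbar h u s) ^ 2 / s ^ 2 + Real.sin (hbar h u s) ^ 4 / s ^ 4)

/-! ### Auxiliary definitions and lemmas -/

open Filter Topology

/-- The integrand in the exponent of `gmet`. -/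
def FF (h : ℝ → ℝ → ℝ) (u t : ℝ) : ℝ :=
  ((h u t - hbar h u t) ^ 2 / t) * (1 + 2 * Real.sin (hbar h u t) ^ 2 / t ^ 2)

/-- The integrand in the subtracted term of `gtil`. -/
def WW (α : ℝ) (h : ℝ → ℝ → ℝ) (u s : ℝ) : ℝ :=
  s ^ 2 * gmet α h u s *
    (2 * Real.sin (hbar h u s) ^ 2 / s ^ 2 + Real.sin (hbar h u s) ^ 4 / s ^ 4)

lemma gmet_eq (α : ℝ) (h : ℝ → ℝ → ℝ) (u r : ℝ) :
    gmet α h u r = Real.exp (-α * ∫ t in Set.Ioi r, FF h u t) := rfl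

lemma gtil_eq (α : ℝ) (h : ℝ → ℝ → ℝ) (u r : ℝ) :
    gtil α h u r = gbarm α h u r - (α / r) * ∫ s in (0:ℝ)..r, WW α h u s := rfl

lemma exp_lip {d e : ℝ} (he : 0 ≤ e) : Real.exp (-e) ≤ Real.exp (-d) + max (d - e) 0 := by
  rcases le_or_gt d e with hde | hde
  · have h1 := Real.exp_le_exp.2 (neg_le_neg hde)
    have h2 := le_max_right (d - e) 0
    linarith
  · have h1 : (e - d) + 1 ≤ Real.exp (e - d) := Real.add_one_le_exp _
    have h2 : Real.exp (-d) = Real.exp (-e) * Real.exp (e - d) := by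
      rw [← Real.exp_add]; ring_nf
    have h3 : Real.exp (-e) ≤ 1 := Real.exp_le_one_iff.2 (by linarith)
    have h4 : 0 < Real.exp (-e) := Real.exp_pos _
    have h5 : d - e ≤ max (d - e) 0 := le_max_left _ _
    nlinarith

lemma int_g4 : IntegrableOn (fun t : ℝ => t / (1+t)^4) (Ioi 0) volume ∧
    (∫ t in Ioi (0:ℝ), t / (1+t)^4) = 1/6 := by
  have hderiv : ∀ t ∈ Ici (0:ℝ),
      HasDerivAt (fun t : ℝ => -(1/(2*(1+t)^2)) + 1/(3*(1+t)^3)) (t/(1+t)^4) t := by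
    intro t ht
    have hne : (1 + t) ≠ 0 := by simp at ht; positivity
    have h1 : HasDerivAt (fun t : ℝ => 1 + t) 1 t := (hasDerivAt_id t).const_add 1
    have h2 : HasDerivAt (fun t : ℝ => 2*(1+t)^2) (2*(2*(1+t)^1*1)) t := ((h1.pow 2).const_mul 2)
    have h3 : HasDerivAt (fun t : ℝ => 3*(1+t)^3) (3*(3*(1+t)^2*1)) t := ((h1.pow 3).const_mul 3)
    have h4 := ((hasDerivAt_const t (1:ℝ)).div h2 (by positivity)).neg
    have h5 := (hasDerivAt_const t (1:ℝ)).div h3 (by positivity)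
    have := h4.add h5
    refine this.congr_deriv ?_
    field_simp
    ring
  have hpos : ∀ t ∈ Ioi (0:ℝ), 0 ≤ t/(1+t)^4 := by intro t ht; have : 0 < t := ht; positivity
  have hlim : Tendsto (fun t : ℝ => -(1/(2*(1+t)^2)) + 1/(3*(1+t)^3)) atTop (𝓝 0) := by
    have l1 : Tendsto (fun t : ℝ => 1 + t) atTop atTop := tendsto_atTop_add_const_left _ 1 tendsto_id
    have l2 : Tendsto (fun t : ℝ => 2*(1+t)^2) atTop atTop :=
      ((tendsto_pow_atTop two_ne_zero).comp l1).const_mul_atTop two_pos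
    have l3 : Tendsto (fun t : ℝ => 3*(1+t)^3) atTop atTop :=
      ((tendsto_pow_atTop three_ne_zero).comp l1).const_mul_atTop three_pos
    have e2 : Tendsto (fun t : ℝ => 1/(2*(1+t)^2)) atTop (𝓝 0) := by
      simpa [one_div, Pi.inv_def] using l2.inv_tendsto_atTop
    have e3 : Tendsto (fun t : ℝ => 1/(3*(1+t)^3)) atTop (𝓝 0) := by
      simpa [one_div, Pi.inv_def] using l3.inv_tendsto_atTop
    simpa using e2.neg.add e3
  constructor
  · exact integrableOn_Ioi_deriv_of_nonneg' hderiv hpos hlim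
  · rw [integral_Ioi_of_hasDerivAt_of_nonneg' hderiv hpos hlim]
    norm_num

lemma int_g8 : IntegrableOn (fun t : ℝ => t / (1+t)^8) (Ioi 0) volume ∧
    (∫ t in Ioi (0:ℝ), t / (1+t)^8) = 1/42 := by
  have hderiv : ∀ t ∈ Ici (0:ℝ),
      HasDerivAt (fun t : ℝ => -(1/(6*(1+t)^6)) + 1/(7*(1+t)^7)) (t/(1+t)^8) t := by
    intro t ht
    have hne : (1 + t) ≠ 0 := by simp at ht; positivity
    have h1 : HasDerivAt (fun t : ℝ => 1 + t) 1 t := (hasDerivAt_id t).const_add 1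
    have h2 : HasDerivAt (fun t : ℝ => 6*(1+t)^6) (6*(6*(1+t)^5*1)) t := ((h1.pow 6).const_mul 6)
    have h3 : HasDerivAt (fun t : ℝ => 7*(1+t)^7) (7*(7*(1+t)^6*1)) t := ((h1.pow 7).const_mul 7)
    have h4 := ((hasDerivAt_const t (1:ℝ)).div h2 (by positivity)).neg
    have h5 := (hasDerivAt_const t (1:ℝ)).div h3 (by positivity)
    have := h4.add h5
    refine this.congr_deriv ?_
    field_simp
    ring
  have hpos : ∀ t ∈ Ioi (0:ℝ), 0 ≤ t/(1+t)^8 := by intro t ht; have : 0 < t := ht; positivity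
  have hlim : Tendsto (fun t : ℝ => -(1/(6*(1+t)^6)) + 1/(7*(1+t)^7)) atTop (𝓝 0) := by
    have l1 : Tendsto (fun t : ℝ => 1 + t) atTop atTop := tendsto_atTop_add_const_left _ 1 tendsto_id
    have l2 : Tendsto (fun t : ℝ => 6*(1+t)^6) atTop atTop :=
      ((tendsto_pow_atTop (by norm_num : (6:ℕ) ≠ 0)).comp l1).const_mul_atTop (by norm_num)
    have l3 : Tendsto (fun t : ℝ => 7*(1+t)^7) atTop atTop :=
      ((tendsto_pow_atTop (by norm_num : (7:ℕ) ≠ 0)).comp l1).const_mul_atTop (by norm_num)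
    have e2 : Tendsto (fun t : ℝ => 1/(6*(1+t)^6)) atTop (𝓝 0) := by
      simpa [one_div, Pi.inv_def] using l2.inv_tendsto_atTop
    have e3 : Tendsto (fun t : ℝ => 1/(7*(1+t)^7)) atTop (𝓝 0) := by
      simpa [one_div, Pi.inv_def] using l3.inv_tendsto_atTop
    simpa using e2.neg.add e3
  constructor
  · exact integrableOn_Ioi_deriv_of_nonneg' hderiv hpos hlim
  · rw [integral_Ioi_of_hasDerivAt_of_nonneg' hderiv hpos hlim]
    norm_num

set_option maxHeartbeats 2000000 in
/-- **Lower bound on the Bondi metric function `g̃`.** If `‖h‖_X ≤ x` and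
`|sin h̄| ≤ |h − h̄|` pointwise, then
`g̃(u,r) ≥ exp(−α(x²+x⁴)/58) − (α/6)(x²+x⁴)`. -/
theorem gtil_lower_bound
    (α x : ℝ) (hα : 0 < α)
    (h : ℝ → ℝ → ℝ)
    (hC1 : ContDiffOn ℝ 1 (fun p : ℝ × ℝ => h p.1 p.2) (Set.Ici 0 ×ˢ Set.Ici 0))
    (hnorm : ∀ u : ℝ, 0 ≤ u → ∀ r : ℝ, 0 ≤ r →
      (1 + r + u) ^ 2 * |h u r| +
        (1 + r + u) ^ 3 * |deriv (fun r' => h u r') r| ≤ x)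
    (hsin : ∀ u : ℝ, 0 ≤ u → ∀ r : ℝ, 0 < r →
      |Real.sin (hbar h u r)| ≤ |h u r - hbar h u r|) :
    ∀ u : ℝ, 0 ≤ u → ∀ r : ℝ, 0 < r →
      Real.exp (-α * (x ^ 2 + x ^ 4) / 58) - (α / 6) * (x ^ 2 + x ^ 4) ≤
        gtil α h u r := by
  intro u hu r hr
  have hx0 : 0 ≤ x := le_trans (by positivity) (hnorm 0 le_rfl 0 le_rfl)
  have hmaps : MapsTo (fun t : ℝ => ((u, t) : ℝ × ℝ)) (Ici 0) (Ici 0 ×ˢ Ici 0) :=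
    fun t ht => ⟨hu, ht⟩
  -- continuity of h u ·
  have hcont : ContinuousOn (fun t => h u t) (Ici 0) := by
    have h1 : ContinuousOn (fun p : ℝ × ℝ => h p.1 p.2) (Ici 0 ×ˢ Ici 0) := hC1.continuousOn
    exact h1.comp ((continuous_const.prodMk continuous_id).continuousOn) hmaps
  -- differentiability of h u · at positive points
  have hdiff : ∀ t : ℝ, 0 < t → DifferentiableAt ℝ (fun t' => h u t') t := by
    intro t ht
    have hD : DifferentiableWithinAt ℝ (fun p : ℝ × ℝ => h p.1 p.2) (Ici 0 ×ˢ Ici 0) (u, t) :=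
      (hC1.differentiableOn one_ne_zero) (u, t) ⟨hu, ht.le⟩
    have hline : DifferentiableWithinAt ℝ (fun t' : ℝ => ((u, t') : ℝ × ℝ)) (Ici 0) t :=
      ((differentiableAt_const u).prodMk differentiableAt_id).differentiableWithinAt
    exact (hD.comp t hline hmaps).differentiableAt (Ici_mem_nhds ht)
  -- derivative bound
  have hd' : ∀ t : ℝ, 0 ≤ t → |deriv (fun t' => h u t') t| ≤ x / (1+u+t)^3 := by
    intro t ht
    have hn := hnorm u hu t ht
    have h2 : (0:ℝ) < (1+u+t)^3 := by positivity
    have h3 : |deriv (fun r' => h u r') t| * (1+u+t)^3 ≤ x := by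
      nlinarith [abs_nonneg (h u t), abs_nonneg (deriv (fun r' => h u r') t),
        sq_nonneg (1+t+u)]
    exact (le_div_iff₀ h2).2 h3
  -- the key pointwise bound |h − h̄| ≤ (x/2) s/(1+s)²
  have hhb : ∀ s : ℝ, 0 < s → |h u s - hbar h u s| ≤ x/2 * (s/(1+s)^2) := by
    intro s hs
    have ha1 : (1:ℝ) ≤ 1 + u := by linarith
    have hapos : (0:ℝ) < 1 + u := by linarith
    set G : ℝ → ℝ := fun t => -((x/2) / ((1+u)+t)^2) with hG
    have hGd : ∀ t : ℝ, 0 ≤ t → HasDerivAt G (x / ((1+u)+t)^3) t := by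
      intro t ht
      have hne : ((1+u)+t) ≠ 0 := by positivity
      have h1 : HasDerivAt (fun τ : ℝ => (1+u) + τ) 1 t := (hasDerivAt_id t).const_add (1+u)
      have h2 : HasDerivAt (fun τ : ℝ => ((1+u)+τ)^2) (2*((1+u)+t)^1*1) t := h1.pow 2
      have h3 := ((hasDerivAt_const t (x/2)).div h2 (by positivity)).neg
      refine h3.congr_deriv ?_
      field_simp
      ring
    have hGcont : ContinuousOn G (Ici 0) :=
      fun t ht => ((hGd t ht).differentiableAt.continuousAt).continuousWithinAt
    have key : ∀ t ∈ Icc 0 s, |h u s - h u t| ≤ G s - G t := by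
      intro t ht
      have mono1 : MonotoneOn (fun τ => G τ - h u τ) (Icc 0 s) := by
        apply monotoneOn_of_deriv_nonneg (convex_Icc 0 s)
        · exact (hGcont.mono Icc_subset_Ici_self).sub (hcont.mono Icc_subset_Ici_self)
        · rw [interior_Icc]
          intro τ hτ
          exact ((hGd τ hτ.1.le).differentiableAt.sub (hdiff τ hτ.1)).differentiableWithinAt
        · rw [interior_Icc]
          intro τ hτ
          rw [deriv_fun_sub (hGd τ hτ.1.le).differentiableAt (hdiff τ hτ.1),
            (hGd τ hτ.1.le).deriv]
          have hb := (abs_le.1 (hd' τ hτ.1.le)).2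
          linarith
      have mono2 : MonotoneOn (fun τ => G τ + h u τ) (Icc 0 s) := by
        apply monotoneOn_of_deriv_nonneg (convex_Icc 0 s)
        · exact (hGcont.mono Icc_subset_Ici_self).add (hcont.mono Icc_subset_Ici_self)
        · rw [interior_Icc]
          intro τ hτ
          exact ((hGd τ hτ.1.le).differentiableAt.add (hdiff τ hτ.1)).differentiableWithinAt
        · rw [interior_Icc]
          intro τ hτ
          rw [deriv_fun_add (hGd τ hτ.1.le).differentiableAt (hdiff τ hτ.1),
            (hGd τ hτ.1.le).deriv]
          have hb := (abs_le.1 (hd' τ hτ.1.le)).1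
          linarith
      have e1 := mono1 ht ⟨hs.le, le_rfl⟩ ht.2
      have e2 := mono2 ht ⟨hs.le, le_rfl⟩ ht.2
      simp only at e1 e2
      rw [abs_sub_le_iff]
      constructor <;> linarith
    have huIcc : uIcc (0:ℝ) s = Icc 0 s := uIcc_of_le hs.le
    have hint_h : IntervalIntegrable (fun t => h u t) volume 0 s := by
      apply ContinuousOn.intervalIntegrable
      rw [huIcc]; exact hcont.mono Icc_subset_Ici_self
    have hint_G : IntervalIntegrable G volume 0 s := by
      apply ContinuousOn.intervalIntegrable
      rw [huIcc]; exact hGcont.mono Icc_subset_Ici_self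
    have hid : h u s - hbar h u s = (1/s) * ∫ t in (0:ℝ)..s, (h u s - h u t) := by
      rw [intervalIntegral.integral_sub intervalIntegrable_const hint_h,
        intervalIntegral.integral_const]
      simp only [hbar, smul_eq_mul, sub_zero]
      field_simp
    have hGint : ∫ t in (0:ℝ)..s, G t = (x/2)/((1+u)+s) - (x/2)/(1+u) := by
      have hd2 : ∀ t ∈ uIcc (0:ℝ) s, HasDerivAt (fun τ => (x/2)/((1+u)+τ)) (G t) t := by
        intro t ht
        rw [huIcc] at ht
        have hne : ((1+u)+t) ≠ 0 := by have := ht.1; positivity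
        have h1 : HasDerivAt (fun τ : ℝ => (1+u) + τ) 1 t := (hasDerivAt_id t).const_add (1+u)
        have h2 := (hasDerivAt_const t (x/2)).div h1 hne
        refine h2.congr_deriv ?_
        rw [hG]
        field_simp
        ring
      rw [intervalIntegral.integral_eq_sub_of_hasDerivAt hd2 hint_G]
      norm_num
    have habs : |∫ t in (0:ℝ)..s, (h u s - h u t)| ≤ ∫ t in (0:ℝ)..s, (G s - G t) := by
      calc |∫ t in (0:ℝ)..s, (h u s - h u t)| ≤ ∫ t in (0:ℝ)..s, |h u s - h u t| :=
          intervalIntegral.abs_integral_le_integral_abs hs.le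
        _ ≤ ∫ t in (0:ℝ)..s, (G s - G t) := by
            apply intervalIntegral.integral_mono_on hs.le _ _ key
            · apply ContinuousOn.intervalIntegrable
              rw [huIcc]
              exact (continuousOn_const.sub (hcont.mono Icc_subset_Ici_self)).abs
            · exact intervalIntegrable_const.sub hint_G
    have hGval : ∫ t in (0:ℝ)..s, (G s - G t) = (x/2) * (s^2/((1+u)*((1+u)+s)^2)) := by
      rw [intervalIntegral.integral_sub intervalIntegrable_const hint_G,
        intervalIntegral.integral_const, hGint]
      have hne1 : ((1+u)+s) ≠ 0 := by positivity
      have hne2 : ((1:ℝ)+u) ≠ 0 := ne_of_gt hapos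
      simp only [hG, smul_eq_mul, sub_zero]
      field_simp
      ring
    have step : |h u s - hbar h u s| ≤ (1/s) * ((x/2) * (s^2/((1+u)*((1+u)+s)^2))) := by
      rw [hid, abs_mul, abs_of_pos (by positivity : (0:ℝ) < 1/s)]
      exact mul_le_mul_of_nonneg_left (hGval ▸ habs) (by positivity)
    have hne1 : ((1+u)+s) ≠ 0 := by positivity
    calc |h u s - hbar h u s| ≤ (1/s) * ((x/2) * (s^2/((1+u)*((1+u)+s)^2))) := step
      _ = (x/2) * (s/((1+u)*((1+u)+s)^2)) := by field_simp
      _ ≤ x/2 * (s/(1+s)^2) := by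
          apply mul_le_mul_of_nonneg_left _ (by positivity : (0:ℝ) ≤ x/2)
          apply div_le_div_of_nonneg_left hs.le (by positivity)
          nlinarith [sq_nonneg (1+s)]
  -- setup of the tail integrand bounds
  set c₁ : ℝ := x^2/24 + x^4/336 with hc₁def
  have hBint : IntegrableOn (fun t : ℝ => x^2/4 * (t/(1+t)^4) + x^4/8 * (t/(1+t)^8))
      (Ioi 0) volume := (int_g4.1.const_mul (x^2/4)).add (int_g8.1.const_mul (x^4/8))
  have hBval : (∫ t in Ioi (0:ℝ), (x^2/4 * (t/(1+t)^4) + x^4/8 * (t/(1+t)^8))) = c₁ := by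
    rw [MeasureTheory.integral_add (int_g4.1.const_mul (x^2/4)) (int_g8.1.const_mul (x^4/8)),
      MeasureTheory.integral_const_mul, MeasureTheory.integral_const_mul, int_g4.2, int_g8.2,
      hc₁def]
    ring
  have hB0 : ∀ t ∈ Ioi (0:ℝ), (0:ℝ) ≤ x^2/4 * (t/(1+t)^4) + x^4/8 * (t/(1+t)^8) := by
    intro t ht
    have ht' : (0:ℝ) < t := ht
    positivity
  have hF0 : ∀ t ∈ Ioi (0:ℝ), 0 ≤ FF h u t := by
    intro t ht
    have ht' : (0:ℝ) < t := ht
    simp only [FF]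
    positivity
  have hFB : ∀ t ∈ Ioi (0:ℝ), FF h u t ≤ x^2/4 * (t/(1+t)^4) + x^4/8 * (t/(1+t)^8) := by
    intro t ht
    have ht' : (0:ℝ) < t := ht
    have hd := hhb t ht'
    have hσd : |Real.sin (hbar h u t)| ≤ |h u t - hbar h u t| := hsin u hu t ht'
    set d := h u t - hbar h u t with hddef
    set σ := Real.sin (hbar h u t) with hσdef
    set D : ℝ := x/2 * (t/(1+t)^2) with hDdef
    have hD0 : (0:ℝ) ≤ D := le_trans (abs_nonneg d) hd
    have h1 : d^2 ≤ D^2 := by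
      rw [← sq_abs d]; exact pow_le_pow_left₀ (abs_nonneg d) hd 2
    have h2 : σ^2 ≤ d^2 := by
      rw [← sq_abs σ, ← sq_abs d]; exact pow_le_pow_left₀ (abs_nonneg σ) hσd 2
    have h3 : d^2*σ^2 ≤ D^2*D^2 := by nlinarith [sq_nonneg d, sq_nonneg σ, sq_nonneg D]
    simp only [FF, ← hddef, ← hσdef]
    calc (d^2/t)*(1+2*σ^2/t^2) = d^2/t + 2*(d^2*σ^2)/t^3 := by field_simp
      _ ≤ D^2/t + 2*(D^2*D^2)/t^3 := by gcongr
      _ = x^2/4 * (t/(1+t)^4) + x^4/8 * (t/(1+t)^8) := by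
          rw [hDdef]; field_simp; ring
  -- continuity of hbar and FF on (0,∞)
  have hPcont : ContinuousOn (fun t => ∫ s in (0:ℝ)..t, h u s) (Ici 0) := by
    intro t ht
    have ht0 : (0:ℝ) ≤ t := ht
    have hR : IntegrableOn (fun s => h u s) (uIcc 0 (t+1)) volume := by
      rw [uIcc_of_le (by linarith : (0:ℝ) ≤ t+1)]
      exact (hcont.mono Icc_subset_Ici_self).integrableOn_compact isCompact_Icc
    have hC := intervalIntegral.continuousOn_primitive_interval hR
    have hmem : uIcc (0:ℝ) (t+1) ∈ 𝓝[Ici 0] t := by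
      rw [uIcc_of_le (by linarith : (0:ℝ) ≤ t+1), mem_nhdsWithin]
      exact ⟨Iio (t+1), isOpen_Iio, by simp,
        fun y hy => ⟨hy.2, le_of_lt hy.1⟩⟩
    exact (hC t (by rw [uIcc_of_le (by linarith : (0:ℝ) ≤ t+1)]; exact ⟨ht0, by linarith⟩)).mono_of_mem_nhdsWithin hmem
  have hbarcont : ContinuousOn (fun t => hbar h u t) (Ioi 0) := by
    simp only [hbar]
    exact (continuousOn_const.div continuousOn_id (fun t ht => ne_of_gt ht)).mul
      (hPcont.mono Ioi_subset_Ici_self)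
  have hFcont : ContinuousOn (fun t => FF h u t) (Ioi 0) := by
    simp only [FF]
    have h1 : ContinuousOn (fun t => h u t) (Ioi 0) := hcont.mono Ioi_subset_Ici_self
    exact (((h1.sub hbarcont).pow 2).div continuousOn_id (fun t ht => ne_of_gt ht)).mul
      (continuousOn_const.add
        ((continuousOn_const.mul ((Real.continuous_sin.comp_continuousOn hbarcont).pow 2)).div
          (continuousOn_id.pow 2) (fun t ht => pow_ne_zero _ (ne_of_gt ht))))
  -- integrability and bounds on the tail integral
  have hFint : ∀ s : ℝ, 0 ≤ s → IntegrableOn (fun t => FF h u t) (Ioi s) volume := by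
    intro s hs0
    have hsub : Ioi s ⊆ Ioi (0:ℝ) := Ioi_subset_Ioi hs0
    apply Integrable.mono' (hBint.mono_set hsub)
      ((hFcont.mono hsub).aemeasurable measurableSet_Ioi).aestronglyMeasurable
    filter_upwards [ae_restrict_mem measurableSet_Ioi] with t ht
    rw [Real.norm_eq_abs, abs_of_nonneg (hF0 t (hsub ht))]
    exact hFB t (hsub ht)
  have hB0ae : (0 : ℝ → ℝ) ≤ᵐ[volume.restrict (Ioi (0:ℝ))]
      (fun t => x^2/4 * (t/(1+t)^4) + x^4/8 * (t/(1+t)^8)) := by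
    filter_upwards [ae_restrict_mem measurableSet_Ioi] with t ht
    exact hB0 t ht
  have hΦub : ∀ s : ℝ, 0 ≤ s → (∫ t in Ioi s, FF h u t) ≤ c₁ := by
    intro s hs0
    have hsub : Ioi s ⊆ Ioi (0:ℝ) := Ioi_subset_Ioi hs0
    calc (∫ t in Ioi s, FF h u t)
        ≤ ∫ t in Ioi s, (x^2/4 * (t/(1+t)^4) + x^4/8 * (t/(1+t)^8)) :=
          setIntegral_mono_on (hFint s hs0) (hBint.mono_set hsub) measurableSet_Ioi
            (fun t ht => hFB t (hsub ht))
      _ ≤ ∫ t in Ioi 0, (x^2/4 * (t/(1+t)^4) + x^4/8 * (t/(1+t)^8)) :=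
          setIntegral_mono_set hBint hB0ae hsub.eventuallyLE
      _ = c₁ := hBval
  have hΦ0 : ∀ s : ℝ, 0 ≤ s → 0 ≤ ∫ t in Ioi s, FF h u t := fun s hs0 =>
    setIntegral_nonneg measurableSet_Ioi (fun t ht => hF0 t (lt_of_le_of_lt hs0 ht))
  -- bounds on gmet
  have hgl : ∀ s : ℝ, 0 ≤ s → Real.exp (-α * c₁) ≤ gmet α h u s := by
    intro s hs0
    rw [gmet_eq]
    apply Real.exp_le_exp.2
    have := hΦub s hs0
    nlinarith
  have hgu : ∀ s : ℝ, 0 ≤ s → gmet α h u s ≤ 1 := by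
    intro s hs0
    rw [gmet_eq]
    apply Real.exp_le_one_iff.2
    have := hΦ0 s hs0
    nlinarith
  have hgmono : MonotoneOn (fun s => gmet α h u s) (Icc 0 r) := by
    intro s₁ hs₁ s₂ hs₂ h12
    simp only
    rw [gmet_eq, gmet_eq]
    apply Real.exp_le_exp.2
    have hmono : (∫ t in Ioi s₂, FF h u t) ≤ ∫ t in Ioi s₁, FF h u t := by
      apply setIntegral_mono_set (hFint s₁ hs₁.1) ?_ (Ioi_subset_Ioi h12).eventuallyLE
      filter_upwards [ae_restrict_mem measurableSet_Ioi] with t ht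
      exact hF0 t (lt_of_le_of_lt hs₁.1 ht)
    nlinarith
  have hgint : IntegrableOn (fun s => gmet α h u s) (Ioc 0 r) volume :=
    (hgmono.integrableOn_isCompact isCompact_Icc).mono_set Ioc_subset_Icc_self
  have hvol : (volume (Ioc (0:ℝ) r)).toReal = r := by
    rw [Real.volume_Ioc]
    simp [ENNReal.toReal_ofReal hr.le]
  -- lower bound for gbarm
  have hgbar : Real.exp (-α * c₁) ≤ gbarm α h u r := by
    have h2 : r * Real.exp (-α * c₁) ≤ ∫ s in Ioc 0 r, gmet α h u s := by
      have h3 : ∫ _ in Ioc (0:ℝ) r, Real.exp (-α*c₁) ≤ ∫ s in Ioc 0 r, gmet α h u s :=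
        setIntegral_mono_on (integrableOn_const measure_Ioc_lt_top.ne) hgint
          measurableSet_Ioc (fun s hs => hgl s hs.1.le)
      rwa [setIntegral_const, measureReal_def, hvol, smul_eq_mul] at h3
    simp only [gbarm]
    rw [intervalIntegral.integral_of_le hr.le]
    calc Real.exp (-α*c₁) = (1/r)*(r*Real.exp (-α*c₁)) := by field_simp
      _ ≤ (1/r) * ∫ s in Ioc 0 r, gmet α h u s :=
          mul_le_mul_of_nonneg_left h2 (by positivity)
  -- bound on the subtracted term
  set C₂ : ℝ := x^2/32 + x^4/256 with hC₂def
  have hW0 : ∀ s ∈ Ioc (0:ℝ) r, 0 ≤ WW α h u s := by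
    intro s hs
    simp only [WW, gmet_eq]
    positivity
  have hWle : ∀ s ∈ Ioc (0:ℝ) r, WW α h u s ≤ C₂ := by
    intro s hs
    have hs' : 0 < s := hs.1
    have hd := hhb s hs'
    have hσd : |Real.sin (hbar h u s)| ≤ |h u s - hbar h u s| := hsin u hu s hs'
    have hg1 : gmet α h u s ≤ 1 := hgu s hs'.le
    have hg0 : 0 < gmet α h u s := by rw [gmet_eq]; exact Real.exp_pos _
    set σ := Real.sin (hbar h u s) with hσdef
    set D : ℝ := x/2 * (s/(1+s)^2) with hDdef
    have hσD : |σ| ≤ D := le_trans hσd hd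
    have hσ2 : σ^2 ≤ D^2 := by rw [← sq_abs σ]; exact pow_le_pow_left₀ (abs_nonneg σ) hσD 2
    have hσ4 : σ^4 ≤ D^4 := by nlinarith [hσ2, sq_nonneg σ, sq_nonneg D]
    have hD0 : (0:ℝ) ≤ D := le_trans (abs_nonneg σ) hσD
    simp only [WW, ← hσdef]
    have expand : s^2 * gmet α h u s * (2*σ^2/s^2 + σ^4/s^4)
        = gmet α h u s * (2*σ^2 + σ^4/s^2) := by
      field_simp
    rw [expand]
    have h5 : 2*σ^2 + σ^4/s^2 ≤ 2*D^2 + D^4/s^2 := by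
      have := (div_le_div_iff_of_pos_right (by positivity : (0:ℝ) < s^2)).2 hσ4
      linarith
    have key : gmet α h u s * (2*σ^2 + σ^4/s^2) ≤ 2*D^2 + D^4/s^2 := by
      calc gmet α h u s * (2*σ^2 + σ^4/s^2) ≤ 1 * (2*D^2 + D^4/s^2) := by
            apply mul_le_mul hg1 h5 (by positivity) (by norm_num)
        _ = 2*D^2 + D^4/s^2 := one_mul _
    have hb1 : 2*D^2 ≤ x^2/32 := by
      rw [hDdef]
      have e : 2*(x/2*(s/(1+s)^2))^2 = x^2/2 * (s^2/(1+s)^4) := by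
        field_simp
      rw [e]
      have h6 : s^2/(1+s)^4 ≤ 1/16 := by
        rw [div_le_div_iff₀ (by positivity) (by norm_num)]
        nlinarith [sq_nonneg (1-s), hs'.le, sq_nonneg ((1-s)*(1+s))]
      calc x^2/2 * (s^2/(1+s)^4) ≤ x^2/2 * (1/16) :=
            mul_le_mul_of_nonneg_left h6 (by positivity)
        _ = x^2/32 := by ring
    have hb2 : D^4/s^2 ≤ x^4/256 := by
      rw [hDdef]
      have e : (x/2*(s/(1+s)^2))^4/s^2 = x^4/16 * (s^2/((1+s)^2)^4) := by
        field_simp; ring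
      rw [e]
      have h7 : s^2/((1+s)^2)^4 ≤ 1/16 := by
        rw [div_le_div_iff₀ (by positivity) (by norm_num)]
        have h8 : (1+s)^2 ≤ ((1+s)^2)^2 := by nlinarith [hs'.le]
        have h9 : ((1+s)^2)^2 ≤ (((1+s)^2)^2)^2 := by nlinarith [hs'.le, sq_nonneg ((1+s)^2)]
        have h10 : 4*s ≤ (1+s)^2 := by nlinarith [sq_nonneg (1-s)]
        nlinarith [sq_nonneg (1+s), hs'.le]
      calc x^4/16 * (s^2/((1+s)^2)^4) ≤ x^4/16 * (1/16) :=
            mul_le_mul_of_nonneg_left h7 (by positivity)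
        _ = x^4/256 := by ring
    rw [hC₂def]
    linarith
  have hWint : IntegrableOn (fun s => WW α h u s) (Ioc 0 r) volume := by
    have m1 : AEMeasurable (fun s => gmet α h u s) (volume.restrict (Ioc 0 r)) :=
      (aemeasurable_restrict_of_monotoneOn measurableSet_Icc hgmono).mono_measure
        (Measure.restrict_mono Ioc_subset_Icc_self le_rfl)
    have hbm : AEMeasurable (fun s => hbar h u s) (volume.restrict (Ioc 0 r)) :=
      (hbarcont.mono Ioc_subset_Ioi_self).aemeasurable measurableSet_Ioc
    have s1 : AEMeasurable (fun s : ℝ => Real.sin (hbar h u s)) (volume.restrict (Ioc 0 r)) :=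
      Real.continuous_sin.measurable.comp_aemeasurable hbm
    have m2 : AEMeasurable (fun s : ℝ => 2*Real.sin (hbar h u s)^2/s^2
        + Real.sin (hbar h u s)^4/s^4) (volume.restrict (Ioc 0 r)) :=
      (((s1.pow_const 2).const_mul 2).div (measurable_id.pow_const 2).aemeasurable).add
        ((s1.pow_const 4).div (measurable_id.pow_const 4).aemeasurable)
    have hmeas : AEStronglyMeasurable (fun s => WW α h u s) (volume.restrict (Ioc 0 r)) := by
      simp only [WW]
      exact (((measurable_id.pow_const 2).aemeasurable.mul m1).mul m2).aestronglyMeasurable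
    apply Integrable.mono'
      ((integrableOn_const measure_Ioc_lt_top.ne) : IntegrableOn (fun _ => C₂) _ _) hmeas
    filter_upwards [ae_restrict_mem measurableSet_Ioc] with s hs
    rw [Real.norm_eq_abs, abs_of_nonneg (hW0 s hs)]
    exact hWle s hs
  have hTle : (α/r) * (∫ s in (0:ℝ)..r, WW α h u s) ≤ α * C₂ := by
    have h2 : ∫ s in Ioc (0:ℝ) r, WW α h u s ≤ r * C₂ := by
      have h3 : ∫ s in Ioc (0:ℝ) r, WW α h u s ≤ ∫ _ in Ioc (0:ℝ) r, C₂ :=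
        setIntegral_mono_on hWint (integrableOn_const measure_Ioc_lt_top.ne)
          measurableSet_Ioc hWle
      rwa [setIntegral_const, measureReal_def, hvol, smul_eq_mul] at h3
    rw [intervalIntegral.integral_of_le hr.le]
    calc (α/r) * ∫ s in Ioc (0:ℝ) r, WW α h u s ≤ (α/r)*(r*C₂) :=
        mul_le_mul_of_nonneg_left h2 (by positivity)
      _ = α * C₂ := by field_simp
  -- final numeric assembly
  have hneg : -α * (x^2+x^4)/58 = -(α * (x^2+x^4)/58) := by ring
  have hlip : Real.exp (-α*(x^2+x^4)/58)
      ≤ Real.exp (-(α * c₁)) + max (α*c₁ - α*(x^2+x^4)/58) 0 := by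
    rw [hneg]
    exact exp_lip (by positivity)
  have hax2 : 0 ≤ α * x^2 := by positivity
  have hax4 : 0 ≤ α * x^4 := by positivity
  have hmax : max (α*c₁ - α*(x^2+x^4)/58) 0 ≤ α*x^2*(17/696) := by
    apply max_le
    · rw [hc₁def]; nlinarith
    · positivity
  have hexpand : Real.exp (-(α * c₁)) = Real.exp (-α * c₁) := by ring_nf
  rw [gtil_eq]
  have hfinal : α*x^2*(17/696) + α * C₂ ≤ (α/6) * (x^2 + x^4) := by
    rw [hC₂def]
    nlinarith
  linarith [hgbar, hTle, hlip, hmax, hexpand ▸ hlip]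

end
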